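/- Let F : ℝ^d → ℝ^d be such that ⟨F(y) − F(x), y − x⟩ ≥ 0 for all x, y ∈ ℝ^d, and let the initial velocity field v : Λ → ℝ^d satisfy ⟨v(x₂) − v(x₁), x₂ − x₁⟩ ≥ 0 for all x₁, x₂ ∈ Λ. Then there are no collisions on [0,∞): y(t,x₁) ≠ y(t,x₂) for all t ≥ 0 and all x₁ ≠ x₂ in Λ. -/

import Mathlib

open Set
open scoped RealInnerProductSpace

/-- Particles in `ℝ^d` labeled by initial positions `x ∈ Λ`, with
trajectories solving `y''(t,x) = F(y(t,x))`, `y(0,x) = x`, `y'(0,x) = v(x)`.  If the force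
is monotone, `⟨F(y) − F(x), y − x⟩ ≥ 0` for all `x, y`, and the initial velocity field is
monotone on `Λ`, `⟨v(x₂) − v(x₁), x₂ − x₁⟩ ≥ 0`, then there are no collisions on `[0,∞)`. -/
theorem no_collisions_of_monotone_force_multidim
    {d : ℕ}
    (F v : EuclideanSpace ℝ (Fin d) → EuclideanSpace ℝ (Fin d))
    (Λ : Set (EuclideanSpace ℝ (Fin d)))
    (y y' : EuclideanSpace ℝ (Fin d) → ℝ → EuclideanSpace ℝ (Fin d))
    (hF_cont : Continuous F)
    (hF_mono : ∀ x z : EuclideanSpace ℝ (Fin d), 0 ≤ ⟪F z - F x, z - x⟫)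
    (hv_mono : ∀ x₁ ∈ Λ, ∀ x₂ ∈ Λ, 0 ≤ ⟪v x₂ - v x₁, x₂ - x₁⟫)
    (hy0 : ∀ x ∈ Λ, y x 0 = x)
    (hy0' : ∀ x ∈ Λ, y' x 0 = v x)
    (hode1 : ∀ x ∈ Λ, ∀ t, 0 ≤ t → HasDerivAt (y x) (y' x t) t)
    (hode2 : ∀ x ∈ Λ, ∀ t, 0 ≤ t → HasDerivAt (y' x) (F (y x t)) t) :
    ∀ t, 0 ≤ t → ∀ x₁ ∈ Λ, ∀ x₂ ∈ Λ, x₁ ≠ x₂ → y x₁ t ≠ y x₂ t := by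
  intro t ht x₁ h₁ x₂ h₂ hne heq
  set u : ℝ → EuclideanSpace ℝ (Fin d) := fun s => y x₂ s - y x₁ s with hu_def
  set w : ℝ → EuclideanSpace ℝ (Fin d) := fun s => y' x₂ s - y' x₁ s with hw_def
  have hu : ∀ s ∈ Ici (0:ℝ), HasDerivAt u (w s) s := fun s hs =>
    (hode1 x₂ h₂ s hs).sub (hode1 x₁ h₁ s hs)
  have hw : ∀ s ∈ Ici (0:ℝ), HasDerivAt w (F (y x₂ s) - F (y x₁ s)) s := fun s hs =>
    (hode2 x₂ h₂ s hs).sub (hode2 x₁ h₁ s hs)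
  set h : ℝ → ℝ := fun s => ⟪w s, u s⟫ with hh_def
  have hh : ∀ s ∈ Ici (0:ℝ), HasDerivAt h
      (⟪w s, w s⟫ + ⟪F (y x₂ s) - F (y x₁ s), u s⟫) s := fun s hs =>
    (hw s hs).inner ℝ (hu s hs)
  have hderiv_nonneg : ∀ s ∈ Ici (0:ℝ),
      0 ≤ ⟪w s, w s⟫ + ⟪F (y x₂ s) - F (y x₁ s), u s⟫ := fun s hs =>
    add_nonneg real_inner_self_nonneg (hF_mono (y x₁ s) (y x₂ s))
  have hh_mono : MonotoneOn h (Ici (0:ℝ)) := by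
    apply monotoneOn_of_deriv_nonneg (convex_Ici 0)
      (fun s hs => (hh s hs).continuousAt.continuousWithinAt)
      (fun s hs => ((hh s (le_of_lt (show (0:ℝ) < s by rwa [interior_Ici] at hs))).differentiableAt.differentiableWithinAt))
    intro s hs
    rw [interior_Ici] at hs
    rw [(hh s (le_of_lt (show (0:ℝ) < s from hs))).deriv]
    exact hderiv_nonneg s (le_of_lt (show (0:ℝ) < s from hs))
  have hh0 : 0 ≤ h 0 := by
    have : h 0 = ⟪v x₂ - v x₁, x₂ - x₁⟫ := by
      simp only [hh_def, hw_def, hu_def, hy0 x₁ h₁, hy0 x₂ h₂, hy0' x₁ h₁, hy0' x₂ h₂]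
    rw [this]
    exact hv_mono x₁ h₁ x₂ h₂
  have hh_nonneg : ∀ s ∈ Ici (0:ℝ), 0 ≤ h s := fun s hs =>
    le_trans hh0 (hh_mono (self_mem_Ici) hs hs)
  set f : ℝ → ℝ := fun s => ⟪u s, u s⟫ with hf_def
  have hf : ∀ s ∈ Ici (0:ℝ), HasDerivAt f (⟪u s, w s⟫ + ⟪w s, u s⟫) s := fun s hs =>
    (hu s hs).inner ℝ (hu s hs)
  have hf_mono : MonotoneOn f (Ici (0:ℝ)) := by
    apply monotoneOn_of_deriv_nonneg (convex_Ici 0)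
      (fun s hs => (hf s hs).continuousAt.continuousWithinAt)
      (fun s hs => ((hf s (le_of_lt (show (0:ℝ) < s by rwa [interior_Ici] at hs))).differentiableAt.differentiableWithinAt))
    intro s hs
    rw [interior_Ici] at hs
    rw [(hf s (le_of_lt (show (0:ℝ) < s from hs))).deriv]
    have := hh_nonneg s (le_of_lt (show (0:ℝ) < s from hs))
    simp only [hh_def] at this
    linarith [real_inner_comm (u s) (w s)]
  have hf0 : 0 < f 0 := by
    have : f 0 = ⟪x₂ - x₁, x₂ - x₁⟫ := by
      simp only [hf_def, hu_def, hy0 x₁ h₁, hy0 x₂ h₂]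
    rw [this, real_inner_self_eq_norm_sq]
    exact pow_pos (norm_pos_iff.mpr (sub_ne_zero.mpr (Ne.symm hne))) 2
  have hft : f t = 0 := by
    simp only [hf_def, hu_def, heq, sub_self, inner_zero_left]
  have := hf_mono self_mem_Ici ht ht
  linarith
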